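/- Suppose p, q, V₀ ∈ ℚ(x), set V₊ = p + q, V* = p + x⁻³·q, V₋ = p + x⁻⁶·q, and assume x⁻²·V₊ − x²·V₋ = (x − x⁻¹)·V₀. Then (x⁻² + x)·V* − (x² + x)·V₋ = (x − x⁻¹)·V₀. -/
import Mathlib


theorem stmt_8 (p q V₀ : RatFunc ℚ)
    (hskein : (RatFunc.X)⁻¹ ^ 2 * (p + q)
        - RatFunc.X ^ 2 * (p + (RatFunc.X)⁻¹ ^ 6 * q)
      = (RatFunc.X - (RatFunc.X)⁻¹) * V₀) :
    ((RatFunc.X)⁻¹ ^ 2 + RatFunc.X) * (p + (RatFunc.X)⁻¹ ^ 3 * q)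
        - (RatFunc.X ^ 2 + RatFunc.X) * (p + (RatFunc.X)⁻¹ ^ 6 * q)
      = (RatFunc.X - (RatFunc.X)⁻¹) * V₀ := by
  rw [← hskein]
  have hX : (RatFunc.X : RatFunc ℚ) ≠ 0 := RatFunc.X_ne_zero
  field_simp
  ring
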